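/- Let T > 0, let g : [0,T] → [0,∞) be measurable with ∫₀ᵀ g(t) dt < ∞, let (C_n)_{n≥0} be a sequence of non-negative real numbers, and let (f_n)_{n≥0} be a sequence of non-negative measurable functions on [0,T] with M := sup_{t∈[0,T]} f_0(t) < ∞, satisfying f_{n+1}(t) ≤ C_n + ∫₀ᵗ f_n(s) g(t−s) ds for every n ≥ 0 and t ∈ [0,T]. Then there exists a sequence (a_n)_{n≥1} of non-negative constants with Σ_{n≥1} a_n^{1/p} < ∞ for every p > 1, such that for every n ≥ 1 and every t ∈ [0,T], f_n(t) ≤ C_{n−1} + Σ_{j=1}^{n−1} C_{n−1−j} a_j + M a_n. -/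

import Mathlib

open MeasureTheory Set

private lemma aux_sum_Icc_one (F : ℕ → ℝ) (m : ℕ) :
    ∑ j ∈ Finset.Icc 1 m, F j = ∑ i ∈ Finset.range m, F (i + 1) := by
  induction m with
  | zero => simp
  | succ m ih => rw [Finset.sum_Icc_succ_top (by omega), ih, Finset.sum_range_succ]

private lemma aux_integral_exp_mul (c t : ℝ) (hc : 0 < c) :
    ∫ s in (0:ℝ)..t, Real.exp (c * s) = (Real.exp (c * t) - 1) / c := by
  have D : ∀ x ∈ uIcc (0:ℝ) t,
      HasDerivAt (fun y => Real.exp (c * y) / c) (Real.exp (c * x)) x := by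
    intro x _
    have h1 : HasDerivAt (fun y : ℝ => c * y) c x := by
      simpa using (hasDerivAt_id x).const_mul c
    have h2 := (Real.hasDerivAt_exp (c * x)).comp x h1
    have h3 := h2.div_const c
    simpa [Function.comp, mul_div_cancel_right₀ _ hc.ne'] using h3
  have hInt : IntervalIntegrable (fun x => Real.exp (c * x)) volume 0 t :=
    (Real.continuous_exp.comp (continuous_const.mul continuous_id)).intervalIntegrable 0 t
  rw [intervalIntegral.integral_eq_sub_of_hasDerivAt D hInt]
  rw [mul_zero, Real.exp_zero]
  ring

private lemma aux_exists_cut (T : ℝ) (g0 : ℝ → ℝ) (hmeas : Measurable g0)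
    (hnn : ∀ x, 0 ≤ g0 x) (hint : IntegrableOn g0 (Icc (0:ℝ) T)) :
    ∃ K : ℝ, 1 ≤ K ∧ ∫ x in Icc (0:ℝ) T, (g0 x - min (g0 x) K) ≤ 1/4 := by
  set μ := volume.restrict (Icc (0:ℝ) T) with hμ
  have hged : ∀ c : ℝ, 0 ≤ c → Integrable (fun x => min (g0 x) c) μ := by
    intro c hc
    refine Integrable.mono hint ((hmeas.min measurable_const).aestronglyMeasurable) (ae_of_all _ fun x => ?_)
    rw [Real.norm_eq_abs, Real.norm_eq_abs, abs_of_nonneg (le_min (hnn x) hc),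
      abs_of_nonneg (hnn x)]
    exact min_le_left _ _
  have htend : Filter.Tendsto (fun k : ℕ => ∫ x, min (g0 x) (k : ℝ) ∂μ) Filter.atTop
      (nhds (∫ x, g0 x ∂μ)) := by
    refine integral_tendsto_of_tendsto_of_monotone (fun k => hged k (Nat.cast_nonneg k)) hint
      (ae_of_all _ fun x k l hkl => min_le_min le_rfl (Nat.cast_le.mpr hkl))
      (ae_of_all _ fun x => ?_)
    refine tendsto_const_nhds.congr' ?_
    filter_upwards [Filter.eventually_ge_atTop (Nat.ceil (g0 x))] with k hk
    exact (min_eq_left ((Nat.le_ceil (g0 x)).trans (Nat.cast_le.mpr hk))).symm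
  have h4 : Filter.Tendsto (fun k : ℕ => (∫ x, g0 x ∂μ) - ∫ x, min (g0 x) (k : ℝ) ∂μ)
      Filter.atTop (nhds 0) := by
    have := htend.const_sub (∫ x, g0 x ∂μ)
    simpa using this
  have h5 : ∀ᶠ k : ℕ in Filter.atTop,
      (∫ x, g0 x ∂μ) - (∫ x, min (g0 x) (k : ℝ) ∂μ) < 1/4 := by
    have := h4.eventually_lt_const (show (0:ℝ) < 1/4 by norm_num)
    simpa using this
  obtain ⟨k, hk⟩ := h5.exists
  refine ⟨max (k : ℝ) 1, le_max_right _ _, ?_⟩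
  have hK0 : (0:ℝ) ≤ max (k : ℝ) 1 := le_trans zero_le_one (le_max_right _ _)
  have hmono : ∫ x, (g0 x - min (g0 x) (max (k:ℝ) 1)) ∂μ
      ≤ ∫ x, (g0 x - min (g0 x) (k:ℝ)) ∂μ := by
    refine integral_mono (hint.sub (hged _ hK0)) (hint.sub (hged _ (Nat.cast_nonneg k)))
      fun x => ?_
    exact sub_le_sub_left (min_le_min le_rfl (le_max_left _ _)) _
  have heq : ∫ x, (g0 x - min (g0 x) (k:ℝ)) ∂μ
      = (∫ x, g0 x ∂μ) - ∫ x, min (g0 x) (k:ℝ) ∂μ :=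
    integral_sub hint (hged _ (Nat.cast_nonneg k))
  calc ∫ x, (g0 x - min (g0 x) (max (k:ℝ) 1)) ∂μ
      ≤ ∫ x, (g0 x - min (g0 x) (k:ℝ)) ∂μ := hmono
    _ ≤ 1/4 := by rw [heq]; linarith

/-- Gronwall-type Lemma A.1 (first assertion): if `f_{n+1}(t) ≤ C_n + ∫₀ᵗ f_n(s) g(t-s) ds`
on `[0,T]`, then there exist non-negative constants `(a_n)_{n≥1}` with
`Σ_{n≥1} a_n^{1/p} < ∞` for every `p > 1`, such that
`f_n(t) ≤ C_{n-1} + Σ_{j=1}^{n-1} C_{n-1-j} a_j + M a_n` for all `n ≥ 1`, `t ∈ [0,T]`. -/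
theorem stmt_0 (T : ℝ) (hT : 0 < T) (g : ℝ → ℝ) (hg_meas : Measurable g)
    (hg_nonneg : ∀ t ∈ Icc (0 : ℝ) T, 0 ≤ g t)
    (hg_int : IntegrableOn g (Icc (0 : ℝ) T))
    (C : ℕ → ℝ) (hC : ∀ n, 0 ≤ C n)
    (f : ℕ → ℝ → ℝ) (hf_meas : ∀ n, Measurable (f n))
    (hf_nonneg : ∀ n, ∀ t ∈ Icc (0 : ℝ) T, 0 ≤ f n t)
    (M : ℝ) (hM : ∀ t ∈ Icc (0 : ℝ) T, f 0 t ≤ M)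
    (hrec : ∀ n, ∀ t ∈ Icc (0 : ℝ) T,
      f (n + 1) t ≤ C n + ∫ s in Icc (0 : ℝ) t, f n s * g (t - s)) :
    ∃ a : ℕ → ℝ, (∀ n, 0 ≤ a n) ∧
      (∀ p : ℝ, 1 < p → Summable (fun n : ℕ => a (n + 1) ^ (1 / p))) ∧
      ∀ n, ∀ t ∈ Icc (0 : ℝ) T,
        f (n + 1) t ≤ C n + (∑ j ∈ Finset.Icc 1 n, C (n - j) * a j) + M * a (n + 1) := by
  have hT0 : (0:ℝ) ∈ Icc (0:ℝ) T := ⟨le_refl 0, hT.le⟩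
  have hM0 : 0 ≤ M := (hf_nonneg 0 0 hT0).trans (hM 0 hT0)
  -- the truncated kernel
  set g0 : ℝ → ℝ := (Icc (0:ℝ) T).indicator g with hg0def
  have hg0_meas : Measurable g0 := hg_meas.indicator measurableSet_Icc
  have hg0_nonneg : ∀ x, 0 ≤ g0 x := by
    intro x
    by_cases hx : x ∈ Icc (0:ℝ) T
    · rw [hg0def, indicator_of_mem hx]; exact hg_nonneg x hx
    · rw [hg0def, indicator_of_notMem hx]
  have hg0_int : IntegrableOn g0 (Icc (0:ℝ) T) :=
    (hg_int.integrable_indicator measurableSet_Icc).integrableOn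
  -- cut level
  obtain ⟨K, hK1, hKcut⟩ := aux_exists_cut T g0 hg0_meas hg0_nonneg hg0_int
  have hK0 : (0:ℝ) < K := lt_of_lt_of_le one_pos hK1
  set b : ℝ → ℝ := fun x => min (g0 x) K with hbdef
  set h : ℝ → ℝ := fun x => g0 x - b x with hhdef
  have hb_nonneg : ∀ x, 0 ≤ b x := fun x => le_min (hg0_nonneg x) hK0.le
  have hb_leK : ∀ x, b x ≤ K := fun x => min_le_right _ _
  have hb_leg : ∀ x, b x ≤ g0 x := fun x => min_le_left _ _
  have hh_nonneg : ∀ x, 0 ≤ h x := fun x => sub_nonneg.2 (hb_leg x)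
  have hb_int : IntegrableOn b (Icc (0:ℝ) T) := by
    refine Integrable.mono hg0_int ((hg0_meas.min measurable_const).aestronglyMeasurable) (ae_of_all _ fun x => ?_)
    rw [Real.norm_eq_abs, Real.norm_eq_abs, abs_of_nonneg (hb_nonneg x), abs_of_nonneg (hg0_nonneg x)]
    exact hb_leg x
  have hh_int : IntegrableOn h (Icc (0:ℝ) T) := hg0_int.sub hb_int
  have hKh : ∫ x in Icc (0:ℝ) T, h x ≤ 1/4 := hKcut
  -- the supersolutions
  set P : ℕ → ℝ → ℝ := fun j t => (2:ℝ)⁻¹ ^ j * Real.exp (4 * K * t) with hPdef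
  have hPcont : ∀ j, Continuous (P j) := fun j =>
    continuous_const.mul (Real.continuous_exp.comp (continuous_const.mul continuous_id))
  have hP_nonneg : ∀ j t, 0 ≤ P j t := fun j t =>
    mul_nonneg (pow_nonneg (by norm_num) j) (Real.exp_pos _).le
  have hP_mono : ∀ j {s t : ℝ}, s ≤ t → P j s ≤ P j t := by
    intro j s t hst
    refine mul_le_mul_of_nonneg_left (Real.exp_le_exp.2 ?_) (pow_nonneg (by norm_num) j)
    nlinarith
  -- integrability of reflected kernels
  have hcomp : ∀ φ : ℝ → ℝ, IntegrableOn φ (Icc (0:ℝ) T) → ∀ t ∈ Icc (0:ℝ) T,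
      IntegrableOn (fun s => φ (t - s)) (Icc (0:ℝ) t) := by
    intro φ hφ t ht
    have h1 : IntegrableOn φ (Icc (0:ℝ) t) := hφ.mono_set (Icc_subset_Icc le_rfl ht.2)
    have h2 : IntervalIntegrable φ volume 0 t := by
      rw [intervalIntegrable_iff_integrableOn_Icc_of_le ht.1]; exact h1
    have h3 := h2.comp_sub_left t
    rw [sub_zero, sub_self] at h3
    rw [← intervalIntegrable_iff_integrableOn_Icc_of_le ht.1]
    exact h3.symm
  have hgeq : ∀ t ∈ Icc (0:ℝ) T, ∀ s ∈ Icc (0:ℝ) t, g (t - s) = g0 (t - s) := by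
    intro t ht s hs
    have : t - s ∈ Icc (0:ℝ) T := ⟨by linarith [hs.2], by linarith [hs.1, ht.2]⟩
    rw [hg0def, indicator_of_mem this]
  -- bound for the h-part of convolutions
  have hsubh : ∀ t ∈ Icc (0:ℝ) T, ∫ s in Icc (0:ℝ) t, h (t - s) ≤ 1/4 := by
    intro t ht
    have e1 : ∫ s in Icc (0:ℝ) t, h (t - s) = ∫ s in (0:ℝ)..t, h (t - s) := by
      rw [intervalIntegral.integral_of_le ht.1, integral_Icc_eq_integral_Ioc]
    rw [e1, intervalIntegral.integral_comp_sub_left h t, sub_zero, sub_self,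
      intervalIntegral.integral_of_le ht.1]
    calc ∫ x in Ioc (0:ℝ) t, h x ≤ ∫ x in Icc (0:ℝ) T, h x := by
          refine setIntegral_mono_set hh_int (ae_of_all _ hh_nonneg) ?_
          exact (Ioc_subset_Icc_self.trans (Icc_subset_Icc le_rfl ht.2)).eventuallyLE
      _ ≤ 1/4 := hKh
  -- bound for the b-part
  have hsubb : ∀ t ∈ Icc (0:ℝ) T, ∫ s in Icc (0:ℝ) t, b (t - s) ≤ K * t := by
    intro t ht
    have h1 := hcomp b hb_int t ht
    calc ∫ s in Icc (0:ℝ) t, b (t - s) ≤ ∫ _s in Icc (0:ℝ) t, K := by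
          refine setIntegral_mono_on h1 ?_ measurableSet_Icc fun s _ => hb_leK _
          exact integrableOn_const measure_Icc_lt_top.ne
      _ = K * t := by
          rw [setIntegral_const, Real.volume_real_Icc_of_le ht.1, smul_eq_mul, sub_zero,
            mul_comm]
  -- key bound for the plain kernel
  have hkey1 : ∀ t ∈ Icc (0:ℝ) T, ∫ s in Icc (0:ℝ) t, g0 (t - s) ≤ P 1 t := by
    intro t ht
    have e0 : EqOn (fun s => g0 (t - s)) (fun s => b (t - s) + h (t - s)) (Icc (0:ℝ) t) := by
      intro s _
      simp only [hhdef]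
      ring
    have e1 : ∫ s in Icc (0:ℝ) t, g0 (t - s)
        = (∫ s in Icc (0:ℝ) t, b (t - s)) + ∫ s in Icc (0:ℝ) t, h (t - s) := by
      rw [setIntegral_congr_fun measurableSet_Icc e0,
        integral_add (hcomp b hb_int t ht) (hcomp h hh_int t ht)]
    rw [e1]
    have hexp : 4 * K * t + 1 ≤ Real.exp (4 * K * t) := Real.add_one_le_exp _
    have hKt : 0 ≤ K * t := mul_nonneg hK0.le ht.1
    have : K * t + 1/4 ≤ P 1 t := by
      simp only [hPdef, pow_one]
      nlinarith
    linarith [hsubb t ht, hsubh t ht]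
  -- key convolution bound for the supersolutions
  have hkeyP : ∀ j, ∀ t ∈ Icc (0:ℝ) T,
      ∫ s in Icc (0:ℝ) t, P j s * g0 (t - s) ≤ P (j + 1) t := by
    intro j t ht
    have hbint := hcomp b hb_int t ht
    have hhint := hcomp h hh_int t ht
    have hPmeas : AEStronglyMeasurable (P j) (volume.restrict (Icc (0:ℝ) t)) :=
      (hPcont j).aestronglyMeasurable
    have hPbd : ∀ᵐ s ∂(volume.restrict (Icc (0:ℝ) t)), ‖P j s‖ ≤ P j t := by
      filter_upwards [ae_restrict_mem measurableSet_Icc] with s hs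
      rw [Real.norm_eq_abs, abs_of_nonneg (hP_nonneg j s)]
      exact hP_mono j hs.2
    have hint1 : IntegrableOn (fun s => P j s * b (t - s)) (Icc (0:ℝ) t) :=
      hbint.bdd_mul hPmeas hPbd
    have hint2 : IntegrableOn (fun s => P j s * h (t - s)) (Icc (0:ℝ) t) :=
      hhint.bdd_mul hPmeas hPbd
    have split : ∫ s in Icc (0:ℝ) t, P j s * g0 (t - s)
        = (∫ s in Icc (0:ℝ) t, P j s * b (t - s)) + ∫ s in Icc (0:ℝ) t, P j s * h (t - s) := by
      rw [← integral_add hint1 hint2]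
      refine setIntegral_congr_fun measurableSet_Icc fun s _ => ?_
      simp only [hhdef]
      ring
    rw [split]
    have hterm1 : (∫ s in Icc (0:ℝ) t, P j s * b (t - s))
        ≤ (2:ℝ)⁻¹ ^ j * Real.exp (4 * K * t) / 4 := by
      have step1 : (∫ s in Icc (0:ℝ) t, P j s * b (t - s))
          ≤ ∫ s in Icc (0:ℝ) t, ((2:ℝ)⁻¹ ^ j * K) * Real.exp (4 * K * s) := by
        refine setIntegral_mono_on hint1 ?_ measurableSet_Icc fun s _ => ?_
        · exact (continuous_const.mul
            (Real.continuous_exp.comp (continuous_const.mul continuous_id))).integrableOn_Icc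
        · calc P j s * b (t - s) ≤ P j s * K :=
                mul_le_mul_of_nonneg_left (hb_leK (t - s)) (hP_nonneg j s)
            _ = (2:ℝ)⁻¹ ^ j * K * Real.exp (4 * K * s) := by
                simp only [hPdef]; ring
      have step2 : ∫ s in Icc (0:ℝ) t, ((2:ℝ)⁻¹ ^ j * K) * Real.exp (4 * K * s)
          = (2:ℝ)⁻¹ ^ j * K * ((Real.exp (4 * K * t) - 1) / (4 * K)) := by
        rw [integral_const_mul]
        congr 1
        rw [integral_Icc_eq_integral_Ioc, ← intervalIntegral.integral_of_le ht.1]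
        exact aux_integral_exp_mul (4 * K) t (by linarith)
      rw [step2] at step1
      refine step1.trans ?_
      have hE : (0:ℝ) < Real.exp (4 * K * t) := Real.exp_pos _
      have heq : (2:ℝ)⁻¹ ^ j * K * ((Real.exp (4 * K * t) - 1) / (4 * K))
          = (2:ℝ)⁻¹ ^ j * (Real.exp (4 * K * t) - 1) / 4 := by
        field_simp
      rw [heq]
      have h2j : (0:ℝ) ≤ (2:ℝ)⁻¹ ^ j := pow_nonneg (by norm_num) j
      nlinarith
    have hterm2 : (∫ s in Icc (0:ℝ) t, P j s * h (t - s)) ≤ P j t * (1/4) := by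
      have step1 : (∫ s in Icc (0:ℝ) t, P j s * h (t - s))
          ≤ ∫ s in Icc (0:ℝ) t, P j t * h (t - s) := by
        refine setIntegral_mono_on hint2 (hhint.const_mul _) measurableSet_Icc fun s hs =>
          mul_le_mul_of_nonneg_right (hP_mono j hs.2) (hh_nonneg _)
      rw [integral_const_mul] at step1
      exact step1.trans (mul_le_mul_of_nonneg_left (hsubh t ht) (hP_nonneg j t))
    calc (∫ s in Icc (0:ℝ) t, P j s * b (t - s)) + ∫ s in Icc (0:ℝ) t, P j s * h (t - s)
        ≤ (2:ℝ)⁻¹ ^ j * Real.exp (4 * K * t) / 4 + P j t * (1/4) := add_le_add hterm1 hterm2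
      _ = P (j + 1) t := by simp only [hPdef]; ring
  -- integrability of P j s * g0 (t - s)
  have hPg_int : ∀ j, ∀ t ∈ Icc (0:ℝ) T,
      IntegrableOn (fun s => P j s * g0 (t - s)) (Icc (0:ℝ) t) := by
    intro j t ht
    refine (hcomp g0 hg0_int t ht).bdd_mul (hPcont j).aestronglyMeasurable (c := P j t) ?_
    filter_upwards [ae_restrict_mem measurableSet_Icc] with s hs
    rw [Real.norm_eq_abs, abs_of_nonneg (hP_nonneg j s)]
    exact hP_mono j hs.2
  -- main induction
  have Hmain : ∀ n, ∀ t ∈ Icc (0:ℝ) T,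
      f (n + 1) t ≤ C n + (∑ j ∈ Finset.Icc 1 n, C (n - j) * P j t) + M * P (n + 1) t := by
    intro n
    induction n with
    | zero =>
      intro t ht
      have hsub1 : Icc (0:ℝ) t ⊆ Icc (0:ℝ) T := Icc_subset_Icc le_rfl ht.2
      have h1 := hrec 0 t ht
      have e1 : ∫ s in Icc (0:ℝ) t, f 0 s * g (t - s)
          = ∫ s in Icc (0:ℝ) t, f 0 s * g0 (t - s) :=
        setIntegral_congr_fun measurableSet_Icc fun s hs => by rw [hgeq t ht s hs]
      have hg0c := hcomp g0 hg0_int t ht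
      have hintf : IntegrableOn (fun s => f 0 s * g0 (t - s)) (Icc (0:ℝ) t) := by
        refine hg0c.bdd_mul ((hf_meas 0).aestronglyMeasurable) (c := M) ?_
        filter_upwards [ae_restrict_mem measurableSet_Icc] with s hs
        rw [Real.norm_eq_abs, abs_of_nonneg (hf_nonneg 0 s (hsub1 hs))]
        exact hM s (hsub1 hs)
      have h2 : ∫ s in Icc (0:ℝ) t, f 0 s * g0 (t - s)
          ≤ ∫ s in Icc (0:ℝ) t, M * g0 (t - s) :=
        setIntegral_mono_on hintf (hg0c.const_mul M) measurableSet_Icc fun s hs =>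
          mul_le_mul_of_nonneg_right (hM s (hsub1 hs)) (hg0_nonneg _)
      rw [integral_const_mul] at h2
      have h3 : M * ∫ s in Icc (0:ℝ) t, g0 (t - s) ≤ M * P 1 t :=
        mul_le_mul_of_nonneg_left (hkey1 t ht) hM0
      have hempty : (∑ j ∈ Finset.Icc 1 0, C (0 - j) * P j t) = 0 := by simp
      rw [hempty, add_zero]
      rw [e1] at h1
      simp only [zero_add] at h1 ⊢
      linarith
    | succ n IH =>
      intro t ht
      have hsub1 : Icc (0:ℝ) t ⊆ Icc (0:ℝ) T := Icc_subset_Icc le_rfl ht.2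
      set B : ℝ → ℝ := fun s =>
        C n + (∑ j ∈ Finset.Icc 1 n, C (n - j) * P j s) + M * P (n + 1) s with hBdef
      have hBcont : Continuous B := by
        refine Continuous.add (Continuous.add continuous_const ?_)
          (continuous_const.mul (hPcont (n + 1)))
        exact continuous_finset_sum _ fun j _ => continuous_const.mul (hPcont j)
      have hBnonneg : ∀ s, 0 ≤ B s := by
        intro s
        have hs1 : 0 ≤ ∑ j ∈ Finset.Icc 1 n, C (n - j) * P j s :=
          Finset.sum_nonneg fun j _ => mul_nonneg (hC _) (hP_nonneg _ _)
        have hs2 : 0 ≤ M * P (n + 1) s := mul_nonneg hM0 (hP_nonneg _ _)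
        have := hC n
        simp only [hBdef]
        linarith
      have hBmono : ∀ {s u : ℝ}, s ≤ u → B s ≤ B u := by
        intro s u hsu
        simp only [hBdef]
        refine add_le_add (add_le_add le_rfl ?_)
          (mul_le_mul_of_nonneg_left (hP_mono (n + 1) hsu) hM0)
        exact Finset.sum_le_sum fun j _ => mul_le_mul_of_nonneg_left (hP_mono j hsu) (hC _)
      have hfB : ∀ s ∈ Icc (0:ℝ) T, f (n + 1) s ≤ B s := IH
      have h1 := hrec (n + 1) t ht
      have e1 : ∫ s in Icc (0:ℝ) t, f (n + 1) s * g (t - s)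
          = ∫ s in Icc (0:ℝ) t, f (n + 1) s * g0 (t - s) :=
        setIntegral_congr_fun measurableSet_Icc fun s hs => by rw [hgeq t ht s hs]
      have hg0c := hcomp g0 hg0_int t ht
      have hintf : IntegrableOn (fun s => f (n + 1) s * g0 (t - s)) (Icc (0:ℝ) t) := by
        refine hg0c.bdd_mul ((hf_meas (n + 1)).aestronglyMeasurable) (c := B T) ?_
        filter_upwards [ae_restrict_mem measurableSet_Icc] with s hs
        rw [Real.norm_eq_abs, abs_of_nonneg (hf_nonneg _ s (hsub1 hs))]
        exact (hfB s (hsub1 hs)).trans (hBmono (hsub1 hs).2)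
      have hintB : IntegrableOn (fun s => B s * g0 (t - s)) (Icc (0:ℝ) t) := by
        refine hg0c.bdd_mul hBcont.aestronglyMeasurable (c := B T) ?_
        filter_upwards [ae_restrict_mem measurableSet_Icc] with s hs
        rw [Real.norm_eq_abs, abs_of_nonneg (hBnonneg s)]
        exact hBmono (hsub1 hs).2
      have h2 : ∫ s in Icc (0:ℝ) t, f (n + 1) s * g0 (t - s)
          ≤ ∫ s in Icc (0:ℝ) t, B s * g0 (t - s) :=
        setIntegral_mono_on hintf hintB measurableSet_Icc fun s hs =>
          mul_le_mul_of_nonneg_right (hfB s (hsub1 hs)) (hg0_nonneg _)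
      have expand : ∫ s in Icc (0:ℝ) t, B s * g0 (t - s)
          = C n * (∫ s in Icc (0:ℝ) t, g0 (t - s))
            + (∑ j ∈ Finset.Icc 1 n, C (n - j) * ∫ s in Icc (0:ℝ) t, P j s * g0 (t - s))
            + M * ∫ s in Icc (0:ℝ) t, P (n + 1) s * g0 (t - s) := by
        have e2 : EqOn (fun s => B s * g0 (t - s))
            (fun s => C n * g0 (t - s)
              + (∑ j ∈ Finset.Icc 1 n, C (n - j) * (P j s * g0 (t - s)))
              + M * (P (n + 1) s * g0 (t - s))) (Icc (0:ℝ) t) := by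
          intro s _
          simp only [hBdef]
          rw [add_mul, add_mul, Finset.sum_mul]
          congr 1
          · congr 1
            exact Finset.sum_congr rfl fun j _ => mul_assoc _ _ _
          · exact mul_assoc _ _ _
        have i1 : IntegrableOn (fun s => C n * g0 (t - s)) (Icc (0:ℝ) t) :=
          hg0c.const_mul _
        have i2 : IntegrableOn
            (fun s => ∑ j ∈ Finset.Icc 1 n, C (n - j) * (P j s * g0 (t - s))) (Icc (0:ℝ) t) :=
          integrable_finset_sum _ fun j _ => (hPg_int j t ht).const_mul _
        have i3 : IntegrableOn (fun s => M * (P (n + 1) s * g0 (t - s))) (Icc (0:ℝ) t) :=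
          (hPg_int (n + 1) t ht).const_mul _
        have i12 : IntegrableOn (fun s => C n * g0 (t - s)
            + ∑ j ∈ Finset.Icc 1 n, C (n - j) * (P j s * g0 (t - s))) (Icc (0:ℝ) t) := i1.add i2
        rw [setIntegral_congr_fun measurableSet_Icc e2]
        rw [integral_add i12 i3, integral_add i1 i2,
          integral_finset_sum _ fun j _ => (hPg_int j t ht).const_mul _,
          integral_const_mul, integral_const_mul]
        congr 2
        exact Finset.sum_congr rfl fun j _ => integral_const_mul _ _
      have b1 : C n * (∫ s in Icc (0:ℝ) t, g0 (t - s)) ≤ C n * P 1 t :=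
        mul_le_mul_of_nonneg_left (hkey1 t ht) (hC n)
      have bsum : (∑ j ∈ Finset.Icc 1 n, C (n - j) * ∫ s in Icc (0:ℝ) t, P j s * g0 (t - s))
          ≤ ∑ j ∈ Finset.Icc 1 n, C (n - j) * P (j + 1) t :=
        Finset.sum_le_sum fun j _ => mul_le_mul_of_nonneg_left (hkeyP j t ht) (hC _)
      have b2 : M * (∫ s in Icc (0:ℝ) t, P (n + 1) s * g0 (t - s)) ≤ M * P (n + 2) t :=
        mul_le_mul_of_nonneg_left (hkeyP (n + 1) t ht) hM0
      have hid : C n * P 1 t + (∑ j ∈ Finset.Icc 1 n, C (n - j) * P (j + 1) t)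
          = ∑ j ∈ Finset.Icc 1 (n + 1), C (n + 1 - j) * P j t := by
        rw [aux_sum_Icc_one (fun j => C (n + 1 - j) * P j t) (n + 1),
          aux_sum_Icc_one (fun j => C (n - j) * P (j + 1) t) n,
          Finset.sum_range_succ']
        simp only [Nat.add_sub_cancel]
        rw [add_comm]
        congr 1
        exact Finset.sum_congr rfl fun i _ => by congr 2 <;> omega
      rw [e1] at h1
      calc f (n + 1 + 1) t ≤ C (n + 1) + ∫ s in Icc (0:ℝ) t, f (n + 1) s * g0 (t - s) := h1
        _ ≤ C (n + 1) + ∫ s in Icc (0:ℝ) t, B s * g0 (t - s) := by linarith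
        _ = C (n + 1) + (C n * (∫ s in Icc (0:ℝ) t, g0 (t - s))
              + (∑ j ∈ Finset.Icc 1 n, C (n - j) * ∫ s in Icc (0:ℝ) t, P j s * g0 (t - s))
              + M * ∫ s in Icc (0:ℝ) t, P (n + 1) s * g0 (t - s)) := by rw [expand]
        _ ≤ C (n + 1) + (C n * P 1 t + (∑ j ∈ Finset.Icc 1 n, C (n - j) * P (j + 1) t)
              + M * P (n + 2) t) := by linarith
        _ = C (n + 1) + (∑ j ∈ Finset.Icc 1 (n + 1), C (n + 1 - j) * P j t)
              + M * P (n + 1 + 1) t := by rw [← hid]; ring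
  -- assemble
  refine ⟨fun j => P j T, fun j => hP_nonneg j T, ?_, ?_⟩
  · intro p hp
    have hp0 : 0 < 1 / p := by positivity
    set r : ℝ := (2:ℝ)⁻¹ ^ (1 / p) with hrdef
    have hr0 : 0 ≤ r := Real.rpow_nonneg (by norm_num) _
    have hr1 : r < 1 := Real.rpow_lt_one (by norm_num) (by norm_num) hp0
    have hE : (0:ℝ) ≤ Real.exp (4 * K * T) := (Real.exp_pos _).le
    have hsum : Summable fun n : ℕ => Real.exp (4 * K * T) ^ (1 / p) * (r ^ n * r) :=
      ((summable_geometric_of_lt_one hr0 hr1).mul_right r).mul_left _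
    refine hsum.congr fun n => ?_
    have h2j : (0:ℝ) ≤ (2:ℝ)⁻¹ ^ (n + 1) := pow_nonneg (by norm_num) _
    have key : ((2:ℝ)⁻¹ ^ (n + 1) : ℝ) ^ (1 / p) = r ^ (n + 1) := by
      rw [hrdef, ← Real.rpow_natCast ((2:ℝ)⁻¹ ^ (1/p)) (n + 1),
        ← Real.rpow_mul (by norm_num : (0:ℝ) ≤ (2:ℝ)⁻¹),
        ← Real.rpow_natCast ((2:ℝ)⁻¹) (n + 1),
        ← Real.rpow_mul (by norm_num : (0:ℝ) ≤ (2:ℝ)⁻¹), mul_comm]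
    show Real.exp (4 * K * T) ^ (1 / p) * (r ^ n * r) = P (n + 1) T ^ (1 / p)
    rw [hPdef]
    show Real.exp (4 * K * T) ^ (1 / p) * (r ^ n * r)
        = ((2:ℝ)⁻¹ ^ (n + 1) * Real.exp (4 * K * T)) ^ (1 / p)
    rw [Real.mul_rpow h2j hE, key, pow_succ]
    ring
  · intro n t ht
    refine (Hmain n t ht).trans ?_
    refine add_le_add (add_le_add le_rfl ?_)
      (mul_le_mul_of_nonneg_left (hP_mono (n + 1) ht.2) hM0)
    exact Finset.sum_le_sum fun j _ => mul_le_mul_of_nonneg_left (hP_mono j ht.2) (hC _)
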